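/- arXiv:1610.06720 — 6 statements merged into one kernel-verified Lean document; each statement's English description precedes it below -/
import Mathlib

section
/- Let (f_n)_{n∈ℕ} be a sequence of orientation-preserving homeomorphisms of ℝ. Then there exist subsets X and Y of ℝ, each of which is the image of the set ⋃_{n∈ℤ}[3n, 3n+1] under some orientation-preserving homeomorphism of ℝ, and for each n a factorization f_n = g_n ∘ h_n ∘ k_n, where k_n has compact support, the support of g_n is contained in X, and the support of h_n is contained in Y. -/
open Set

namespace Stmt4

/-- affine interpolation -/
noncomputable def aff (a b a' b' x : ℝ) : ℝ := a' + (x - a) * ((b' - a') / (b - a))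

lemma aff_left (a b a' b' : ℝ) : aff a b a' b' a = a' := by simp [aff]

lemma aff_right {a b : ℝ} (h : a < b) (a' b' : ℝ) : aff a b a' b' b = b' := by
  have : b - a ≠ 0 := by linarith
  have h2 : (b - a) * ((b' - a') / (b - a)) = b' - a' := by field_simp
  simp only [aff]; linarith

lemma aff_strictMono {a b a' b' : ℝ} (h : a < b) (h' : a' < b') :
    StrictMono (aff a b a' b') := by
  intro x y hxy
  have hs : 0 < (b' - a') / (b - a) := div_pos (by linarith) (by linarith)
  have := mul_lt_mul_of_pos_right (sub_lt_sub_right hxy a) hs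
  simpa [aff] using this

lemma aff_surjOn {a b a' b' : ℝ} (h : a < b) (h' : a' < b') :
    SurjOn (aff a b a' b') (Icc a b) (Icc a' b') := by
  intro y hy
  have hba : b - a ≠ 0 := by linarith
  have hba' : b' - a' ≠ 0 := by linarith
  refine ⟨a + (y - a') * ((b - a) / (b' - a')), ⟨?_, ?_⟩, ?_⟩
  · have h1 : 0 ≤ (y - a') * ((b - a) / (b' - a')) := by
      apply mul_nonneg (by linarith [hy.1]) (le_of_lt (div_pos (by linarith) (by linarith)))
    linarith
  · have h1 : (y - a') * ((b - a) / (b' - a')) ≤ (b' - a') * ((b - a) / (b' - a')) :=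
      mul_le_mul_of_nonneg_right (by linarith [hy.2]) (le_of_lt (div_pos (by linarith) (by linarith)))
    have h2 : (b' - a') * ((b - a) / (b' - a')) = b - a := by field_simp
    linarith
  · show aff a b a' b' _ = y
    unfold aff
    field_simp
    ring

/-- locate a point within a bi-infinite strictly monotone partition -/
lemma locate {c : ℤ → ℝ} (hmono : StrictMono c)
    (hbot : ∀ x : ℝ, ∃ j, c j ≤ x) (htop : ∀ x : ℝ, ∃ j, x < c j) (x : ℝ) :
    ∃ j, c j ≤ x ∧ x < c (j + 1) := by
  obtain ⟨j0, hj0⟩ := hbot x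
  obtain ⟨lb, hlb1, hlb2⟩ := Int.exists_least_of_bdd (P := fun j => x < c j)
    ⟨j0, fun z hz => by
      by_contra hc
      push_neg at hc
      exact absurd (le_trans (hmono.monotone hc.le) hj0) (not_le.2 hz)⟩
    (htop x)
  refine ⟨lb - 1, ?_, by simpa using hlb1⟩
  by_contra hc
  push_neg at hc
  have := hlb2 _ hc
  omega

lemma locate_unique {c : ℤ → ℝ} (hmono : StrictMono c) {i j : ℤ} {x : ℝ}
    (hi : c i ≤ x ∧ x < c (i + 1)) (hj : c j ≤ x ∧ x < c (j + 1)) : i = j := by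
  by_contra hne
  rcases lt_or_gt_of_ne hne with h | h
  · have : c (i + 1) ≤ c j := hmono.monotone (by omega)
    linarith [hi.2, hj.1]
  · have : c (j + 1) ≤ c i := hmono.monotone (by omega)
    linarith [hi.1, hj.2]

/-- glue two monotone surjections on adjacent closed intervals -/
lemma glue2 {a m b a' m' b' : ℝ} (hm : a ≤ m) (hb : m ≤ b)
    {F G : ℝ → ℝ}
    (hF : StrictMonoOn F (Icc a m)) (hG : StrictMonoOn G (Icc m b))
    (hFs : SurjOn F (Icc a m) (Icc a' m')) (hGs : SurjOn G (Icc m b) (Icc m' b'))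
    (hFm : F m = m') (hGm : G m = m')
    (_hb' : m' ≤ b') :
    StrictMonoOn (fun x => if x ≤ m then F x else G x) (Icc a b) ∧
    SurjOn (fun x => if x ≤ m then F x else G x) (Icc a b) (Icc a' b') := by
  constructor
  · intro x hx y hy hxy
    dsimp only
    split_ifs with h1 h2 h2
    · exact hF ⟨hx.1, h1⟩ ⟨le_trans hx.1 hxy.le, h2⟩ hxy
    · push_neg at h2
      calc F x ≤ F m := hF.monotoneOn ⟨hx.1, h1⟩ ⟨hm, le_refl m⟩ h1
        _ = m' := hFm
        _ = G m := hGm.symm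
        _ < G y := hG ⟨le_refl m, hb⟩ ⟨h2.le, hy.2⟩ h2
    · push_neg at h1; exact absurd (lt_of_lt_of_le h1 (le_trans hxy.le h2)) (lt_irrefl m)
    · push_neg at h1
      exact hG ⟨h1.le, hx.2⟩ ⟨le_trans h1.le hxy.le, hy.2⟩ hxy
  · intro y hy
    rcases le_or_gt y m' with h | h
    · obtain ⟨x, hx, hxy⟩ := hFs ⟨hy.1, h⟩
      exact ⟨x, ⟨hx.1, le_trans hx.2 hb⟩, by simp only [if_pos hx.2]; exact hxy⟩
    · obtain ⟨x, hx, hxy⟩ := hGs ⟨h.le, hy.2⟩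
      have hxm : ¬ x ≤ m := by
        intro hle
        have : x = m := le_antisymm hle hx.1
        rw [this] at hxy; rw [hGm] at hxy; exact absurd hxy.symm (ne_of_gt h)
      exact ⟨x, ⟨le_trans hm hx.1, hx.2⟩, by simp only [if_neg hxm]; exact hxy⟩

/-- glue countably many pieces along a bi-infinite partition into an order iso -/
lemma glueZ {c d : ℤ → ℝ} (hc : StrictMono c) (hd : StrictMono d)
    (hcbot : ∀ x : ℝ, ∃ j, c j ≤ x) (hctop : ∀ x : ℝ, ∃ j, x < c j)
    (hdbot : ∀ y : ℝ, ∃ j, d j ≤ y) (hdtop : ∀ y : ℝ, ∃ j, y < d j)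
    (P : ℤ → ℝ → ℝ)
    (hmono : ∀ j, StrictMonoOn (P j) (Icc (c j) (c (j + 1))))
    (hsurj : ∀ j, SurjOn (P j) (Icc (c j) (c (j + 1))) (Icc (d j) (d (j + 1))))
    (hl : ∀ j, P j (c j) = d j) (hr : ∀ j, P j (c (j + 1)) = d (j + 1)) :
    ∃ Φ : ℝ ≃o ℝ, ∀ j, ∀ x ∈ Icc (c j) (c (j + 1)), Φ x = P j x := by
  have hloc := locate hc hcbot hctop
  classical
  set idx : ℝ → ℤ := fun x => (hloc x).choose with hidx
  have hidxs : ∀ x, c (idx x) ≤ x ∧ x < c (idx x + 1) := fun x => (hloc x).choose_spec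
  set φ : ℝ → ℝ := fun x => P (idx x) x with hφ
  have key : ∀ (j : ℤ) (x : ℝ), c j ≤ x → x < c (j + 1) → φ x = P j x := by
    intro j x h1 h2
    have := locate_unique hc (hidxs x) ⟨h1, h2⟩
    simp only [hφ, this]
  have hmem : ∀ x, x ∈ Icc (c (idx x)) (c (idx x + 1)) :=
    fun x => ⟨(hidxs x).1, (hidxs x).2.le⟩
  have hmonoφ : StrictMono φ := by
    intro x y hxy
    set i := idx x
    set j := idx y
    have hij : i ≤ j := by
      by_contra hcon
      push_neg at hcon
      have : c (j + 1) ≤ c i := hc.monotone (by omega)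
      linarith [(hidxs x).1, (hidxs y).2]
    rcases eq_or_lt_of_le hij with he | hlt
    · have : φ x = P i x := rfl
      rw [this]
      have h2 : φ y = P i y := by show P j y = P i y; rw [he]
      rw [h2]
      exact hmono i (hmem x) (by rw [he]; exact hmem y) hxy
    · calc φ x = P i x := rfl
        _ < P i (c (i + 1)) := hmono i (hmem x) ⟨hc.monotone (by omega), le_refl _⟩
            (lt_of_lt_of_le (hidxs x).2 (le_refl _))
        _ = d (i + 1) := hr i
        _ ≤ d j := hd.monotone (by omega)
        _ = P j (c j) := (hl j).symm
        _ ≤ P j y := (hmono j).monotoneOn ⟨le_refl _, hc.monotone (by omega)⟩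
            (hmem y) (hidxs y).1
        _ = φ y := rfl
  have hsurjφ : Function.Surjective φ := by
    intro y
    obtain ⟨j, hj1, hj2⟩ := locate hd hdbot hdtop y
    obtain ⟨x, hx, hPx⟩ := hsurj j ⟨hj1, hj2.le⟩
    have hxlt : x < c (j + 1) := by
      rcases eq_or_lt_of_le hx.2 with he | h
      · exfalso; rw [he, hr j] at hPx; exact absurd hPx (ne_of_gt hj2)
      · exact h
    exact ⟨x, by rw [key j x hx.1 hxlt]; exact hPx⟩
  refine ⟨StrictMono.orderIsoOfSurjective φ hmonoφ hsurjφ, ?_⟩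
  intro j x hx
  rw [StrictMono.coe_orderIsoOfSurjective]
  rcases eq_or_lt_of_le hx.2 with he | h
  · have h1 : c (j + 1) ≤ x := he.ge
    have h2 : x < c (j + 1 + 1) := lt_of_le_of_lt he.le (by exact_mod_cast hc (by omega))
    rw [key (j + 1) x h1 h2, he, hl (j + 1), hr j]
  · exact key j x hx.1 h

/-! ### the escaping sequence -/

variable (f : ℕ → (ℝ ≃o ℝ))

noncomputable def rS : ℕ → ℝ
  | 0 => 0
  | k + 1 => rS k + 1 + ∑ n ∈ Finset.range (k + 1),
      (|f n (rS k)| + |(f n).symm (rS k)| + |f n (-(rS k))| + |(f n).symm (-(rS k))|)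

lemma rS_zero : rS f 0 = 0 := rfl

lemma rS_succ_ge (k : ℕ) : rS f k + 1 ≤ rS f (k + 1) := by
  have : (0:ℝ) ≤ ∑ n ∈ Finset.range (k + 1),
      (|f n (rS f k)| + |(f n).symm (rS f k)| + |f n (-(rS f k))| + |(f n).symm (-(rS f k))|) :=
    Finset.sum_nonneg fun n _ => by positivity
  simp only [rS]; linarith

lemma rS_strictMono : StrictMono (rS f) :=
  strictMono_nat_of_lt_succ fun k => by linarith [rS_succ_ge f k]

lemma rS_ge (k : ℕ) : (k : ℝ) ≤ rS f k := by
  induction k with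
  | zero => simp [rS]
  | succ k ih => have := rS_succ_ge f k; push_cast; linarith

lemma rS_big {n k : ℕ} (hnk : n ≤ k) :
    f n (rS f k) < rS f (k + 1) ∧ (f n).symm (rS f k) < rS f (k + 1) ∧
    -(rS f (k + 1)) < f n (-(rS f k)) ∧ -(rS f (k + 1)) < (f n).symm (-(rS f k)) := by
  have hterm : |f n (rS f k)| + |(f n).symm (rS f k)| + |f n (-(rS f k))| + |(f n).symm (-(rS f k))|
      ≤ ∑ m ∈ Finset.range (k + 1),
      (|f m (rS f k)| + |(f m).symm (rS f k)| + |f m (-(rS f k))| + |(f m).symm (-(rS f k))|) :=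
    Finset.single_le_sum (f := fun m => |f m (rS f k)| + |(f m).symm (rS f k)| + |f m (-(rS f k))| + |(f m).symm (-(rS f k))|)
      (fun m _ => by positivity) (Finset.mem_range.2 (by omega))
  have hr0 : (0:ℝ) ≤ rS f k := le_trans (by positivity) (rS_ge f k)
  have h1 := le_abs_self (f n (rS f k))
  have h2 := le_abs_self ((f n).symm (rS f k))
  have h3 := neg_abs_le (f n (-(rS f k)))
  have h4 := neg_abs_le ((f n).symm (-(rS f k)))
  have habs1 := abs_nonneg (f n (rS f k))
  have habs2 := abs_nonneg ((f n).symm (rS f k))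
  have habs3 := abs_nonneg (f n (-(rS f k)))
  have habs4 := abs_nonneg ((f n).symm (-(rS f k)))
  simp only [rS]
  refine ⟨by linarith, by linarith, by linarith, by linarith⟩

lemma rS_big' {n k : ℕ} (hnk : n ≤ k) :
    f n (-(rS f (k + 1))) < -(rS f k) ∧ (f n).symm (-(rS f (k + 1))) < -(rS f k) := by
  constructor
  · have := (f n).strictMono (rS_big f hnk).2.2.2
    rwa [OrderIso.apply_symm_apply] at this
  · have := (f n).symm.strictMono (rS_big f hnk).2.2.1
    rwa [OrderIso.symm_apply_apply] at this

noncomputable def cS : ℤ → ℝ := fun j => if 0 ≤ j then rS f j.toNat else -(rS f (-j).toNat)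

lemma cS_nonneg_eq {j : ℤ} (h : 0 ≤ j) : cS f j = rS f j.toNat := if_pos h

lemma cS_nonpos_eq {j : ℤ} (h : j ≤ 0) : cS f j = -(rS f (-j).toNat) := by
  rcases eq_or_lt_of_le h with he | hlt
  · subst he; simp [cS, rS]
  · exact if_neg (by omega)

lemma cS_strictMono : StrictMono (cS f) := by
  apply strictMono_int_of_lt_succ
  intro j
  rcases le_or_gt 0 j with h | h
  · rw [cS_nonneg_eq f h, cS_nonneg_eq f (by omega)]
    apply rS_strictMono
    omega
  · rw [cS_nonpos_eq f (by omega), cS_nonpos_eq f (by omega : j + 1 ≤ 0)]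
    have : (-(j+1)).toNat < (-j).toNat := by omega
    linarith [rS_strictMono f this]

lemma cS_ge (j : ℤ) (h : 0 ≤ j) : (j : ℝ) ≤ cS f j := by
  rw [cS_nonneg_eq f h]
  have h1 := rS_ge f j.toNat
  have h2 : ((j.toNat : ℕ) : ℝ) = (j : ℝ) := by
    exact_mod_cast congrArg (fun z : ℤ => (z : ℝ)) (Int.toNat_of_nonneg h)
  rwa [h2] at h1

lemma cS_le (j : ℤ) (h : j ≤ 0) : cS f j ≤ (j : ℝ) := by
  rw [cS_nonpos_eq f h]
  have h1 := rS_ge f (-j).toNat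
  have h2 : (((-j).toNat : ℕ) : ℝ) = -(j : ℝ) := by
    exact_mod_cast congrArg (fun z : ℤ => (z : ℝ)) (Int.toNat_of_nonneg (by omega : (0:ℤ) ≤ -j))
  rw [h2] at h1
  linarith

lemma cS_top (x : ℝ) : ∃ j, x < cS f j := by
  obtain ⟨k, hk⟩ := exists_int_gt x
  refine ⟨max k 0, lt_of_lt_of_le ?_ (cS_ge f _ (le_max_right k 0))⟩
  exact lt_of_lt_of_le hk (by exact_mod_cast le_max_left k 0)

lemma cS_bot (x : ℝ) : ∃ j, cS f j ≤ x := by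
  obtain ⟨k, hk⟩ := exists_int_lt x
  refine ⟨min k 0, le_trans (le_trans (cS_le f _ (min_le_right k 0)) ?_) hk.le⟩
  exact_mod_cast min_le_left k 0

/-- key escape bound: `f n (c l) < c (l+1)` for far-out `l` -/
lemma cS_bigA (n : ℕ) (l : ℤ) (h : (n:ℤ) ≤ l ∨ l + 1 ≤ -(n:ℤ)) :
    f n (cS f l) < cS f (l + 1) := by
  rcases le_or_gt 0 l with hl | hl
  · rw [cS_nonneg_eq f hl, cS_nonneg_eq f (by omega), show (l+1).toNat = l.toNat + 1 by omega]
    exact (rS_big f (by omega : n ≤ l.toNat)).1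
  · have hn : l + 1 ≤ -(n:ℤ) := by
      rcases h with h | h
      · omega
      · exact h
    rw [cS_nonpos_eq f (by omega), cS_nonpos_eq f (by omega : l + 1 ≤ 0),
      show (-l).toNat = (-(l+1)).toNat + 1 by omega]
    exact (rS_big' f (by omega : n ≤ (-(l+1)).toNat)).1

/-- key escape bound: `c l < f n (c (l+1))` for far-out `l` -/
lemma cS_bigB (n : ℕ) (l : ℤ) (h : (n:ℤ) ≤ l ∨ l + 1 ≤ -(n:ℤ)) :
    cS f l < f n (cS f (l + 1)) := by
  have key : (f n).symm (cS f l) < cS f (l + 1) := by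
    rcases le_or_gt 0 l with hl | hl
    · rw [cS_nonneg_eq f hl, cS_nonneg_eq f (by omega), show (l+1).toNat = l.toNat + 1 by omega]
      exact (rS_big f (by omega : n ≤ l.toNat)).2.1
    · have hn : l + 1 ≤ -(n:ℤ) := by
        rcases h with h | h
        · omega
        · exact h
      rw [cS_nonpos_eq f (by omega), cS_nonpos_eq f (by omega : l + 1 ≤ 0),
        show (-l).toNat = (-(l+1)).toNat + 1 by omega]
      exact (rS_big' f (by omega : n ≤ (-(l+1)).toNat)).2
  have := (f n).strictMono key
  rwa [OrderIso.apply_symm_apply] at this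

/-! ### partitions -/

noncomputable def pS : ℤ → ℝ := fun j => if Even j then 3*(j:ℝ)/2 else (3*(j:ℝ) - 1)/2

noncomputable def qS : ℤ → ℝ := fun j => if Even j then cS f (3*j) else cS f (3*j+1)

noncomputable def tS : ℤ → ℝ := fun j => if Even j then cS f (3*j+3) else cS f (3*j+4)

lemma even_succ_not {j : ℤ} (h : Even j) : ¬ Even (j + 1) := fun h' => (Int.even_add_one.mp h') h

lemma not_even_succ {j : ℤ} (h : ¬ Even j) : Even (j + 1) := Int.even_add_one.mpr h

lemma pS_even {j : ℤ} (h : Even j) : pS j = 3*(j:ℝ)/2 := if_pos h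
lemma pS_odd {j : ℤ} (h : ¬ Even j) : pS j = (3*(j:ℝ) - 1)/2 := if_neg h
lemma qS_even {j : ℤ} (h : Even j) : qS f j = cS f (3*j) := if_pos h
lemma qS_odd {j : ℤ} (h : ¬ Even j) : qS f j = cS f (3*j+1) := if_neg h
lemma tS_even {j : ℤ} (h : Even j) : tS f j = cS f (3*j+3) := if_pos h
lemma tS_odd {j : ℤ} (h : ¬ Even j) : tS f j = cS f (3*j+4) := if_neg h

lemma pS_strictMono : StrictMono pS := by
  apply strictMono_int_of_lt_succ
  intro j
  by_cases h : Even j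
  · rw [pS_even h, pS_odd (even_succ_not h)]
    push_cast
    linarith
  · rw [pS_odd h, pS_even (not_even_succ h)]
    push_cast
    linarith

lemma pS_lb (j : ℤ) : (3*(j:ℝ) - 1)/2 ≤ pS j := by
  unfold pS; split_ifs <;> linarith

lemma pS_ub (j : ℤ) : pS j ≤ 3*(j:ℝ)/2 := by
  unfold pS; split_ifs <;> linarith

lemma pS_top (x : ℝ) : ∃ j, x < pS j := by
  obtain ⟨k, hk⟩ := exists_int_gt x
  refine ⟨max k 1, lt_of_lt_of_le ?_ (pS_lb _)⟩
  have h1 : (k:ℝ) ≤ (max k 1 : ℤ) := by exact_mod_cast le_max_left k 1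
  have h2 : (1:ℝ) ≤ (max k 1 : ℤ) := by exact_mod_cast le_max_right k 1
  linarith

lemma pS_bot (x : ℝ) : ∃ j, pS j ≤ x := by
  obtain ⟨k, hk⟩ := exists_int_lt x
  refine ⟨min k 0, le_trans (le_trans (pS_ub _) ?_) hk.le⟩
  have h1 : ((min k 0 : ℤ) : ℝ) ≤ (k:ℝ) := by exact_mod_cast min_le_left k 0
  have h2 : ((min k 0 : ℤ) : ℝ) ≤ 0 := by exact_mod_cast min_le_right k 0
  linarith

lemma qS_lb (j : ℤ) : cS f (3*j) ≤ qS f j := by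
  unfold qS; split_ifs
  · exact le_refl _
  · exact ((cS_strictMono f) (by omega)).le

lemma qS_ub (j : ℤ) : qS f j ≤ cS f (3*j+1) := by
  unfold qS; split_ifs
  · exact ((cS_strictMono f) (by omega)).le
  · exact le_refl _

lemma qS_strictMono : StrictMono (qS f) := by
  apply strictMono_int_of_lt_succ
  intro j
  calc qS f j ≤ cS f (3*j+1) := qS_ub f j
    _ < cS f (3*(j+1)) := cS_strictMono f (by omega)
    _ ≤ qS f (j+1) := qS_lb f (j+1)

lemma qS_top (x : ℝ) : ∃ j, x < qS f j := by
  obtain ⟨j0, hj0⟩ := cS_top f x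
  refine ⟨max j0 0, lt_of_lt_of_le (lt_of_lt_of_le hj0 ?_) (qS_lb f _)⟩
  exact (cS_strictMono f).monotone (by omega : j0 ≤ 3 * max j0 0)

lemma qS_bot (x : ℝ) : ∃ j, qS f j ≤ x := by
  obtain ⟨j0, hj0⟩ := cS_bot f x
  refine ⟨min j0 (-1), le_trans (le_trans (qS_ub f _) ?_) hj0⟩
  exact (cS_strictMono f).monotone (by omega : 3 * min j0 (-1) + 1 ≤ j0)

lemma tS_lb (j : ℤ) : cS f (3*j+3) ≤ tS f j := by
  unfold tS; split_ifs
  · exact le_refl _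
  · exact ((cS_strictMono f) (by omega)).le

lemma tS_ub (j : ℤ) : tS f j ≤ cS f (3*j+4) := by
  unfold tS; split_ifs
  · exact ((cS_strictMono f) (by omega)).le
  · exact le_refl _

lemma tS_strictMono : StrictMono (tS f) := by
  apply strictMono_int_of_lt_succ
  intro j
  calc tS f j ≤ cS f (3*j+4) := tS_ub f j
    _ < cS f (3*(j+1)+3) := cS_strictMono f (by omega)
    _ ≤ tS f (j+1) := tS_lb f (j+1)

lemma tS_top (x : ℝ) : ∃ j, x < tS f j := by
  obtain ⟨j0, hj0⟩ := cS_top f x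
  refine ⟨max j0 0, lt_of_lt_of_le (lt_of_lt_of_le hj0 ?_) (tS_lb f _)⟩
  exact (cS_strictMono f).monotone (by omega : j0 ≤ 3 * max j0 0 + 3)

lemma tS_bot (x : ℝ) : ∃ j, tS f j ≤ x := by
  obtain ⟨j0, hj0⟩ := cS_bot f x
  refine ⟨min j0 (-4), le_trans (le_trans (tS_ub f _) ?_) hj0⟩
  exact (cS_strictMono f).monotone (by omega : 3 * min j0 (-4) + 4 ≤ j0)

/-! ### the sets X and Y -/

def XS : Set ℝ := ⋃ i : ℤ, Icc (cS f (6*i)) (cS f (6*i+4))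

def YS : Set ℝ := ⋃ i : ℤ, Icc (cS f (6*i+3)) (cS f (6*i+7))

lemma notX_iff (x : ℝ) : x ∉ XS f ↔ ∃ i : ℤ, cS f (6*i+4) < x ∧ x < cS f (6*i+6) := by
  constructor
  · intro hx
    obtain ⟨j, h1, h2⟩ := locate (cS_strictMono f) (cS_bot f) (cS_top f) x
    obtain ⟨i, s, hs0, hs5, rfl⟩ : ∃ i s, 0 ≤ s ∧ s ≤ 5 ∧ j = 6*i+s :=
      ⟨j/6, j%6, by omega, by omega, by omega⟩
    simp only [XS, mem_iUnion, mem_Icc, not_exists, not_and, not_le] at hx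
    rcases lt_or_ge s 4 with hs | hs
    · exfalso
      have ha : cS f (6*i) ≤ x := le_trans ((cS_strictMono f).monotone (by omega)) h1
      have hb : x ≤ cS f (6*i+4) := le_trans h2.le ((cS_strictMono f).monotone (by omega))
      exact absurd (hx i ha) (not_lt.2 hb)
    · rcases eq_or_lt_of_le hs with he | hs4
      · -- s = 4
        refine ⟨i, ?_, lt_of_lt_of_le h2 ((cS_strictMono f).monotone (by omega))⟩
        rcases eq_or_lt_of_le h1 with he2 | h
        · exfalso
          have ha : cS f (6*i) ≤ x := le_trans ((cS_strictMono f).monotone (by omega)) h1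
          have hb : x ≤ cS f (6*i+4) := by rw [← he2]; exact ((cS_strictMono f).monotone (by omega))
          exact absurd (hx i ha) (not_lt.2 hb)
        · exact lt_of_le_of_lt ((cS_strictMono f).monotone (by omega)) h
      · -- s = 5
        exact ⟨i, lt_of_lt_of_le (cS_strictMono f (by omega)) h1,
          lt_of_lt_of_le h2 ((cS_strictMono f).monotone (by omega))⟩
  · rintro ⟨i, hi1, hi2⟩
    simp only [XS, mem_iUnion, mem_Icc, not_exists, not_and, not_le]
    intro i' h'
    by_contra hc
    push_neg at hc
    rcases le_or_gt i' i with h | h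
    · exact absurd (le_trans hc ((cS_strictMono f).monotone (by omega))) (not_le.2 hi1)
    · exact absurd (lt_of_lt_of_le hi2 ((cS_strictMono f).monotone (by omega))) (not_lt.2 h')

lemma notY_iff (x : ℝ) : x ∉ YS f ↔ ∃ i : ℤ, cS f (6*i+7) < x ∧ x < cS f (6*i+9) := by
  constructor
  · intro hx
    obtain ⟨j, h1, h2⟩ := locate (cS_strictMono f) (cS_bot f) (cS_top f) x
    obtain ⟨i, s, hs0, hs5, rfl⟩ : ∃ i s, 0 ≤ s ∧ s ≤ 5 ∧ j = 6*i+s :=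
      ⟨j/6, j%6, by omega, by omega, by omega⟩
    simp only [YS, mem_iUnion, mem_Icc, not_exists, not_and, not_le] at hx
    have hYmem : ∀ i' : ℤ, cS f (6*i'+3) ≤ x → x ≤ cS f (6*i'+7) → False :=
      fun i' ha hb => absurd (hx i' ha) (not_lt.2 hb)
    rcases lt_or_ge s 1 with hs | hs
    · -- s = 0 : x ∈ [c (6i), c (6i+1)) ⊆ block (i-1)
      exfalso
      refine hYmem (i-1) (le_trans ((cS_strictMono f).monotone (by omega)) h1)
        (le_trans h2.le ((cS_strictMono f).monotone (by omega)))
    · rcases lt_or_ge s 3 with hs' | hs'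
      · -- s = 1 or 2 : gap of block (i-1), careful at left endpoint when s = 1
        refine ⟨i-1, ?_, lt_of_lt_of_le h2 ((cS_strictMono f).monotone (by omega))⟩
        have hle : cS f (6*(i-1)+7) ≤ x := le_trans ((cS_strictMono f).monotone (by omega)) h1
        rcases eq_or_lt_of_le hle with he | h
        · exact absurd (hYmem (i-1) (le_trans ((cS_strictMono f).monotone (by omega)) he.le) he.ge)
            not_false
        · exact h
      · -- s ∈ {3,4,5} : inside block i
        exfalso
        exact hYmem i (le_trans ((cS_strictMono f).monotone (by omega)) h1)
          (le_trans h2.le ((cS_strictMono f).monotone (by omega)))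
  · rintro ⟨i, hi1, hi2⟩
    simp only [YS, mem_iUnion, mem_Icc, not_exists, not_and, not_le]
    intro i' h'
    by_contra hc
    push_neg at hc
    rcases le_or_gt i' i with h | h
    · exact absurd (le_trans hc ((cS_strictMono f).monotone (by omega))) (not_le.2 hi1)
    · exact absurd (lt_of_lt_of_le hi2 ((cS_strictMono f).monotone (by omega))) (not_lt.2 h')

lemma XS_closed : IsClosed (XS f) := by
  have h : (XS f)ᶜ = ⋃ i : ℤ, Ioo (cS f (6*i+4)) (cS f (6*i+6)) := by
    ext x
    simp only [mem_compl_iff, mem_iUnion, mem_Ioo]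
    exact notX_iff f x
  rw [← compl_compl (XS f), h]
  exact (isOpen_iUnion fun i => isOpen_Ioo).isClosed_compl

lemma YS_closed : IsClosed (YS f) := by
  have h : (YS f)ᶜ = ⋃ i : ℤ, Ioo (cS f (6*i+7)) (cS f (6*i+9)) := by
    ext x
    simp only [mem_compl_iff, mem_iUnion, mem_Ioo]
    exact notY_iff f x
  rw [← compl_compl (YS f), h]
  exact (isOpen_iUnion fun i => isOpen_Ioo).isClosed_compl

lemma orderIso_image_Icc (e : ℝ ≃o ℝ) (a b : ℝ) : e '' Icc a b = Icc (e a) (e b) := by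
  ext y
  constructor
  · rintro ⟨x, hx, rfl⟩
    exact ⟨e.monotone hx.1, e.monotone hx.2⟩
  · intro hy
    refine ⟨e.symm y, ⟨?_, ?_⟩, e.apply_symm_apply y⟩
    · have := e.symm.monotone hy.1
      rwa [e.symm_apply_apply] at this
    · have := e.symm.monotone hy.2
      rwa [e.symm_apply_apply] at this

/-- generic: an order iso sending `[3n, 3n+1]` onto `[u n, v n]` pulls the model set
onto `⋃ [u n, v n]`. -/
lemma image_model (e : ℝ ≃o ℝ) (u v : ℤ → ℝ)
    (hu : ∀ n : ℤ, e (3*(n:ℝ)) = u n) (hv : ∀ n : ℤ, e (3*(n:ℝ)+1) = v n) :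
    e '' (⋃ n : ℤ, Icc (3*(n:ℝ)) (3*(n:ℝ)+1)) = ⋃ n : ℤ, Icc (u n) (v n) := by
  rw [image_iUnion]
  refine iUnion_congr fun n => ?_
  rw [orderIso_image_Icc, hu, hv]

/-- the parametrization of X -/
lemma phi_exists : ∃ φ : ℝ ≃o ℝ,
    XS f = φ '' (⋃ n : ℤ, Icc (3*(n:ℝ)) (3*(n:ℝ)+1)) := by
  have hp := pS_strictMono
  have hq := qS_strictMono f
  have hplt : ∀ j : ℤ, pS j < pS (j+1) := fun j => hp (by omega)
  have hqlt : ∀ j : ℤ, qS f j < qS f (j+1) := fun j => hq (by omega)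
  obtain ⟨φ, hφ⟩ := glueZ hp hq pS_bot pS_top (qS_bot f) (qS_top f)
    (fun j => aff (pS j) (pS (j+1)) (qS f j) (qS f (j+1)))
    (fun j => (aff_strictMono (hplt j) (hqlt j)).strictMonoOn _)
    (fun j => aff_surjOn (hplt j) (hqlt j))
    (fun j => aff_left _ _ _ _)
    (fun j => aff_right (hplt j) _ _)
  have hval : ∀ j : ℤ, φ (pS j) = qS f j := by
    intro j
    rw [hφ j (pS j) ⟨le_refl _, (hplt j).le⟩, aff_left]
  have h3n : ∀ n : ℤ, (3*(n:ℝ)) = pS (2*n) := by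
    intro n
    rw [pS_even ⟨n, by ring⟩]
    push_cast
    ring
  have h3n1 : ∀ n : ℤ, (3*(n:ℝ)+1) = pS (2*n+1) := by
    intro n
    rw [pS_odd (by rw [Int.even_iff]; omega)]
    push_cast
    ring
  refine ⟨φ, ?_⟩
  rw [image_model φ (fun n => cS f (6*n)) (fun n => cS f (6*n+4)) ?_ ?_]
  · rfl
  · intro n
    rw [h3n n, hval (2*n), qS_even f ⟨n, by ring⟩]
    congr 1
    ring
  · intro n
    rw [h3n1 n, hval (2*n+1), qS_odd f (by rw [Int.even_iff]; omega)]
    congr 1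
    ring

/-- the parametrization of Y -/
lemma psi_exists : ∃ ψ : ℝ ≃o ℝ,
    YS f = ψ '' (⋃ n : ℤ, Icc (3*(n:ℝ)) (3*(n:ℝ)+1)) := by
  have hp := pS_strictMono
  have ht := tS_strictMono f
  have hplt : ∀ j : ℤ, pS j < pS (j+1) := fun j => hp (by omega)
  have htlt : ∀ j : ℤ, tS f j < tS f (j+1) := fun j => ht (by omega)
  obtain ⟨ψ, hψ⟩ := glueZ hp ht pS_bot pS_top (tS_bot f) (tS_top f)
    (fun j => aff (pS j) (pS (j+1)) (tS f j) (tS f (j+1)))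
    (fun j => (aff_strictMono (hplt j) (htlt j)).strictMonoOn _)
    (fun j => aff_surjOn (hplt j) (htlt j))
    (fun j => aff_left _ _ _ _)
    (fun j => aff_right (hplt j) _ _)
  have hval : ∀ j : ℤ, ψ (pS j) = tS f j := by
    intro j
    rw [hψ j (pS j) ⟨le_refl _, (hplt j).le⟩, aff_left]
  have h3n : ∀ n : ℤ, (3*(n:ℝ)) = pS (2*n) := by
    intro n
    rw [pS_even ⟨n, by ring⟩]
    push_cast
    ring
  have h3n1 : ∀ n : ℤ, (3*(n:ℝ)+1) = pS (2*n+1) := by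
    intro n
    rw [pS_odd (by rw [Int.even_iff]; omega)]
    push_cast
    ring
  refine ⟨ψ, ?_⟩
  rw [image_model ψ (fun n => cS f (6*n+3)) (fun n => cS f (6*n+7)) ?_ ?_]
  · rfl
  · intro n
    rw [h3n n, hval (2*n), tS_even f ⟨n, by ring⟩]
    congr 1
    ring
  · intro n
    rw [h3n1 n, hval (2*n+1), tS_odd f (by rw [Int.even_iff]; omega)]
    congr 1
    ring

/-! ### the main construction for a single `n` -/

lemma main_step (n : ℕ) :
    ∃ g h k : ℝ ≃o ℝ,
      (∀ x : ℝ, f n x = g (h (k x))) ∧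
      IsCompact (closure {x : ℝ | k x ≠ x}) ∧
      {x : ℝ | g x ≠ x} ⊆ XS f ∧
      {x : ℝ | h x ≠ x} ⊆ YS f := by
  classical
  have hcS := cS_strictMono f
  have htS := tS_strictMono f
  -- abbreviations
  set A : ℤ → ℝ := fun j => (f n).symm (cS f (3*j+4)) with hA
  set Gm : ℤ → ℝ := fun j => (f n).symm (cS f (3*j+6)) with hGm
  set act : ℤ → Prop := fun j => Even j ∧ ((2*(n:ℤ)+4 ≤ j) ∨ (j ≤ -(2*(n:ℤ)+4))) with hactdef
  set P : ℤ → ℝ → ℝ := fun j x =>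
    if act j then
      (if x ≤ A j then aff (cS f (3*j+3)) (A j) (cS f (3*j+3)) (cS f (3*j+4)) x
       else if x ≤ Gm j then f n x
       else aff (Gm j) (cS f (3*j+7)) (cS f (3*j+6)) (cS f (3*j+7)) x)
    else x with hP
  -- basic inequalities for active blocks
  have hblk : ∀ j : ℤ, act j →
      cS f (3*j+3) < A j ∧ A j < Gm j ∧ Gm j < cS f (3*j+7) := by
    intro j hj
    have cond1 : (n:ℤ) ≤ 3*j+3 ∨ (3*j+3) + 1 ≤ -(n:ℤ) := by
      rcases hj.2 with h | h
      · left; omega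
      · right; omega
    have cond2 : (n:ℤ) ≤ 3*j+6 ∨ (3*j+6) + 1 ≤ -(n:ℤ) := by
      rcases hj.2 with h | h
      · left; omega
      · right; omega
    refine ⟨?_, ?_, ?_⟩
    · have h1 := cS_bigA f n (3*j+3) cond1
      have h2 := (f n).symm.strictMono h1
      rw [OrderIso.symm_apply_apply] at h2
      simpa [hA, show 3*j+3+1 = 3*j+4 by ring] using h2
    · exact (f n).symm.strictMono (hcS (by omega))
    · have h1 := cS_bigB f n (3*j+6) cond2
      have h2 := (f n).symm.strictMono h1
      rw [OrderIso.symm_apply_apply] at h2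
      simpa [hGm, show 3*j+6+1 = 3*j+7 by ring] using h2
  -- endpoints of the blocks
  have htj_even : ∀ j : ℤ, Even j → tS f j = cS f (3*j+3) := fun j hj => tS_even f hj
  have htj1_even : ∀ j : ℤ, Even j → tS f (j+1) = cS f (3*j+7) := by
    intro j hj
    rw [tS_odd f (even_succ_not hj)]
    congr 1
    ring
  -- per-piece properties
  have hPmono : ∀ j, StrictMonoOn (P j) (Icc (tS f j) (tS f (j+1))) := by
    intro j
    by_cases hj : act j
    · obtain ⟨h1, h2, h3⟩ := hblk j hj
      have e34 : cS f (3*j+3) < cS f (3*j+4) := hcS (by omega)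
      have e46 : cS f (3*j+4) < cS f (3*j+6) := hcS (by omega)
      have e67 : cS f (3*j+6) < cS f (3*j+7) := hcS (by omega)
      have hFm' : f n (Gm j) = cS f (3*j+6) := (f n).apply_symm_apply _
      have hFA : f n (A j) = cS f (3*j+4) := (f n).apply_symm_apply _
      have inner := glue2 (a := A j) (m := Gm j) (b := cS f (3*j+7))
        (a' := cS f (3*j+4)) (m' := cS f (3*j+6)) (b' := cS f (3*j+7))
        h2.le h3.le
        ((f n).strictMono.strictMonoOn _)
        ((aff_strictMono h3 e67).strictMonoOn _)
        (fun y hy => ⟨(f n).symm y,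
          ⟨(f n).symm.monotone hy.1, (f n).symm.monotone hy.2⟩, (f n).apply_symm_apply y⟩)
        (aff_surjOn h3 e67)
        hFm' (aff_left _ _ _ _) e67.le
      have outer := glue2 (a := cS f (3*j+3)) (m := A j) (b := cS f (3*j+7))
        (a' := cS f (3*j+3)) (m' := cS f (3*j+4)) (b' := cS f (3*j+7))
        h1.le (le_trans h2.le h3.le)
        ((aff_strictMono h1 e34).strictMonoOn _)
        inner.1
        (aff_surjOn h1 e34)
        inner.2
        (aff_right h1 _ _)
        (by
          show (if A j ≤ Gm j then f n (A j) else _) = cS f (3*j+4)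
          rw [if_pos h2.le, hFA])
        (le_trans e46.le e67.le)
      rw [htj_even j hj.1, htj1_even j hj.1]
      intro x hx y hy hxy
      have := outer.1 hx hy hxy
      simpa only [hP, if_pos hj] using this
    · intro x hx y hy hxy
      simpa only [hP, if_neg hj] using hxy
  have hPsurj : ∀ j, SurjOn (P j) (Icc (tS f j) (tS f (j+1))) (Icc (tS f j) (tS f (j+1))) := by
    intro j
    by_cases hj : act j
    · obtain ⟨h1, h2, h3⟩ := hblk j hj
      have e34 : cS f (3*j+3) < cS f (3*j+4) := hcS (by omega)
      have e46 : cS f (3*j+4) < cS f (3*j+6) := hcS (by omega)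
      have e67 : cS f (3*j+6) < cS f (3*j+7) := hcS (by omega)
      have hFm' : f n (Gm j) = cS f (3*j+6) := (f n).apply_symm_apply _
      have hFA : f n (A j) = cS f (3*j+4) := (f n).apply_symm_apply _
      have inner := glue2 (a := A j) (m := Gm j) (b := cS f (3*j+7))
        (a' := cS f (3*j+4)) (m' := cS f (3*j+6)) (b' := cS f (3*j+7))
        h2.le h3.le
        ((f n).strictMono.strictMonoOn _)
        ((aff_strictMono h3 e67).strictMonoOn _)
        (fun y hy => ⟨(f n).symm y,
          ⟨(f n).symm.monotone hy.1, (f n).symm.monotone hy.2⟩, (f n).apply_symm_apply y⟩)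
        (aff_surjOn h3 e67)
        hFm' (aff_left _ _ _ _) e67.le
      have outer := glue2 (a := cS f (3*j+3)) (m := A j) (b := cS f (3*j+7))
        (a' := cS f (3*j+3)) (m' := cS f (3*j+4)) (b' := cS f (3*j+7))
        h1.le (le_trans h2.le h3.le)
        ((aff_strictMono h1 e34).strictMonoOn _)
        inner.1
        (aff_surjOn h1 e34)
        inner.2
        (aff_right h1 _ _)
        (by
          show (if A j ≤ Gm j then f n (A j) else _) = cS f (3*j+4)
          rw [if_pos h2.le, hFA])
        (le_trans e46.le e67.le)
      rw [htj_even j hj.1, htj1_even j hj.1]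
      intro y hy
      obtain ⟨x, hx, hxy⟩ := outer.2 hy
      refine ⟨x, hx, ?_⟩
      simpa only [hP, if_pos hj] using hxy
    · intro y hy
      exact ⟨y, hy, by simp only [hP, if_neg hj]⟩
  have hPl : ∀ j, P j (tS f j) = tS f j := by
    intro j
    by_cases hj : act j
    · obtain ⟨h1, h2, h3⟩ := hblk j hj
      simp only [hP, if_pos hj, htj_even j hj.1, if_pos (le_refl _)]
      rw [if_pos h1.le, aff_left]
    · simp only [hP, if_neg hj]
  have hPr : ∀ j, P j (tS f (j+1)) = tS f (j+1) := by
    intro j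
    by_cases hj : act j
    · obtain ⟨h1, h2, h3⟩ := hblk j hj
      simp only [hP, if_pos hj, htj1_even j hj.1]
      rw [if_neg (by push_neg; exact lt_trans h2 h3),
        if_neg (by push_neg; exact h3), aff_right h3]
    · simp only [hP, if_neg hj]
  -- glue into the middle homeomorphism H
  obtain ⟨H, hH⟩ := glueZ htS htS (tS_bot f) (tS_top f) (tS_bot f) (tS_top f)
    P hPmono hPsurj hPl hPr
  -- H fixes partition points
  have hHt : ∀ j, H (tS f j) = tS f j := by
    intro j
    rw [hH j (tS f j) ⟨le_refl _, (htS (by omega)).le⟩, hPl j]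
  -- H is the identity off Y
  have hHoff : ∀ x, x ∉ YS f → H x = x := by
    intro x hx
    obtain ⟨j, h1, h2⟩ := locate htS (tS_bot f) (tS_top f) x
    rw [hH j x ⟨h1, h2.le⟩]
    by_cases hj : act j
    · exfalso
      obtain ⟨i, hi⟩ := hj.1
      refine hx (mem_iUnion.2 ⟨i, ?_, ?_⟩)
      · calc cS f (6*i+3) = tS f j := by rw [htj_even j hj.1]; congr 1; omega
          _ ≤ x := h1
      · calc x ≤ tS f (j+1) := h2.le
          _ = cS f (6*i+7) := by rw [htj1_even j hj.1]; congr 1; omega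
    · simp only [hP, if_neg hj]
  -- H inverts f n in the middle of active gaps
  have hHmid : ∀ j, act j → ∀ x, cS f (3*j+4) < x → x < cS f (3*j+6) →
      H ((f n).symm x) = x := by
    intro j hj x hx1 hx2
    obtain ⟨h1, h2, h3⟩ := hblk j hj
    have hs1 : A j < (f n).symm x := (f n).symm.strictMono hx1
    have hs2 : (f n).symm x < Gm j := (f n).symm.strictMono hx2
    have hmem : (f n).symm x ∈ Icc (tS f j) (tS f (j+1)) := by
      rw [htj_even j hj.1, htj1_even j hj.1]
      exact ⟨(lt_trans h1 hs1).le, (lt_trans hs2 h3).le⟩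
    rw [hH j _ hmem]
    simp only [hP, if_pos hj, if_neg (not_le.2 hs1), if_pos hs2.le]
    exact (f n).apply_symm_apply x
  -- the outer data
  set jL : ℤ := -(2*(n:ℤ)+4) with hjL
  set jR : ℤ := 2*(n:ℤ)+4 with hjR
  have hactL : act jL := ⟨by rw [hjL, Int.even_iff]; omega, Or.inr (le_refl _)⟩
  have hactR : act jR := ⟨by rw [hjR, Int.even_iff]; omega, Or.inl (le_refl _)⟩
  set qpt := cS f (3*jL+5) with hqpt
  set ppt := cS f (3*jR+5) with hppt
  have hqp : qpt < ppt := hcS (by omega)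
  set E : ℝ → ℝ := fun x => f n (H.symm x) with hE
  have hEmono : StrictMono E := (f n).strictMono.comp H.symm.strictMono
  have hEgap : ∀ j, act j → ∀ x, cS f (3*j+4) < x → x < cS f (3*j+6) → E x = x := by
    intro j hj x h1 h2
    have h3 := hHmid j hj x h1 h2
    have h4 : H.symm x = (f n).symm x := by
      have h5 := congrArg (fun z => H.symm z) h3
      simp only [OrderIso.symm_apply_apply] at h5
      exact h5.symm
    simp only [hE]
    rw [h4, (f n).apply_symm_apply]
  have hEq : E qpt = qpt := hEgap jL hactL qpt (hcS (by omega)) (hcS (by omega))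
  have hEp : E ppt = ppt := hEgap jR hactR ppt (hcS (by omega)) (hcS (by omega))
  set Gfun : ℝ → ℝ := fun x => if x ≤ qpt then E x else if x ≤ ppt then x else E x with hGfun
  have hGmono : StrictMono Gfun := by
    intro x y hxy
    simp only [hGfun]
    by_cases h1 : x ≤ qpt
    · rw [if_pos h1]
      by_cases h2 : y ≤ qpt
      · rw [if_pos h2]; exact hEmono hxy
      · rw [if_neg h2]
        by_cases h3 : y ≤ ppt
        · rw [if_pos h3]
          have hq : E x ≤ qpt := by rw [← hEq]; exact hEmono.monotone h1
          push_neg at h2; linarith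
        · rw [if_neg h3]; exact hEmono hxy
    · rw [if_neg h1]
      push_neg at h1
      by_cases h2 : x ≤ ppt
      · rw [if_pos h2, if_neg (by push_neg; linarith : ¬ y ≤ qpt)]
        by_cases h3 : y ≤ ppt
        · rw [if_pos h3]; exact hxy
        · rw [if_neg h3]
          push_neg at h3
          have : ppt < E y := by rw [← hEp]; exact hEmono h3
          linarith
      · push_neg at h2
        rw [if_neg (not_le.2 h2), if_neg (by push_neg; linarith : ¬ y ≤ qpt),
          if_neg (by push_neg; linarith : ¬ y ≤ ppt)]
        exact hEmono hxy
  have hGsurj : Function.Surjective Gfun := by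
    intro y
    rcases le_or_gt y qpt with h1 | h1
    · refine ⟨H ((f n).symm y), ?_⟩
      have hEval : E (H ((f n).symm y)) = y := by
        simp only [hE]
        rw [H.symm_apply_apply, (f n).apply_symm_apply]
      have hle : H ((f n).symm y) ≤ qpt := by
        by_contra hc
        push_neg at hc
        have h2 := hEmono hc
        rw [hEq, hEval] at h2
        linarith
      simp only [hGfun]
      rw [if_pos hle, hEval]
    · rcases le_or_gt y ppt with h2 | h2
      · exact ⟨y, by simp only [hGfun]; rw [if_neg (not_le.2 h1), if_pos h2]⟩
      · refine ⟨H ((f n).symm y), ?_⟩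
        have hEval : E (H ((f n).symm y)) = y := by
          simp only [hE]
          rw [H.symm_apply_apply, (f n).apply_symm_apply]
        have hgt : ppt < H ((f n).symm y) := by
          by_contra hc
          push_neg at hc
          have h3 := hEmono.monotone hc
          rw [hEp, hEval] at h3
          linarith
        simp only [hGfun]
        rw [if_neg (not_le.2 (lt_trans hqp hgt)), if_neg (not_le.2 hgt), hEval]
  set G : ℝ ≃o ℝ := StrictMono.orderIsoOfSurjective Gfun hGmono hGsurj with hG
  have hGcoe : ∀ x, G x = Gfun x := fun x => by
    rw [hG, StrictMono.coe_orderIsoOfSurjective]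
  set K : ℝ ≃o ℝ := ((f n).trans G.symm).trans H.symm with hK
  refine ⟨G, H, K, ?_, ?_, ?_, ?_⟩
  · intro x
    simp only [hK, OrderIso.trans_apply]
    rw [H.apply_symm_apply, G.apply_symm_apply]
  · -- compact support of K
    have hsub : {x : ℝ | K x ≠ x} ⊆ Icc (tS f jL) (tS f (jR+1)) := by
      intro x hx
      simp only [mem_setOf_eq] at hx
      by_contra hmem
      simp only [mem_Icc, not_and_or, not_le] at hmem
      apply hx
      have key : G (H x) = f n x → K x = x := by
        intro hkey
        simp only [hK, OrderIso.trans_apply]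
        rw [← hkey, G.symm_apply_apply, H.symm_apply_apply]
      apply key
      rcases hmem with hmem | hmem
      · -- x < tS f jL
        have hHx : H x < tS f jL := by
          have h2 := H.strictMono hmem
          rwa [hHt jL] at h2
        have h0 : tS f jL ≤ qpt := by
          rw [htj_even jL hactL.1]
          exact (hcS (by omega)).le
        rw [hGcoe]
        simp only [hGfun]
        rw [if_pos (by linarith : H x ≤ qpt)]
        simp only [hE]
        rw [H.symm_apply_apply]
      · -- tS f (jR+1) < x
        have hHx : tS f (jR+1) < H x := by
          have h2 := H.strictMono hmem
          rwa [hHt (jR+1)] at h2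
        have h0 : ppt < tS f (jR+1) := by
          rw [htj1_even jR hactR.1]
          exact hcS (by omega)
        rw [hGcoe]
        simp only [hGfun]
        rw [if_neg (by push_neg; linarith : ¬ H x ≤ qpt),
          if_neg (by push_neg; linarith : ¬ H x ≤ ppt)]
        simp only [hE]
        rw [H.symm_apply_apply]
    exact IsCompact.of_isClosed_subset isCompact_Icc isClosed_closure
      (closure_minimal hsub isClosed_Icc)
  · -- support of G inside X
    intro x hx
    simp only [mem_setOf_eq] at hx
    by_contra hX
    apply hx
    obtain ⟨i, hi1, hi2⟩ := (notX_iff f x).1 hX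
    have e4 : cS f (3*(2*i)+4) = cS f (6*i+4) := by congr 1; ring
    have e6 : cS f (3*(2*i)+6) = cS f (6*i+6) := by congr 1; ring
    rw [hGcoe]
    simp only [hGfun]
    rcases le_or_gt x qpt with h1 | h1
    · rcases eq_or_lt_of_le h1 with he | h1'
      · rw [if_pos h1, he, hEq]
      · have hidx : 6*i+4 < 3*jL+5 := by
          have := lt_trans hi1 h1'
          exact (hcS.lt_iff_lt).1 this
        have hact2 : act (2*i) := ⟨⟨i, by ring⟩, Or.inr (by omega)⟩
        rw [if_pos h1]
        exact hEgap (2*i) hact2 x (by rw [e4]; exact hi1) (by rw [e6]; exact hi2)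
    · rcases le_or_gt x ppt with h2 | h2
      · rw [if_neg (not_le.2 h1), if_pos h2]
      · have hidx : 3*jR+5 < 6*i+6 := by
          have := lt_trans h2 hi2
          exact (hcS.lt_iff_lt).1 this
        have hact2 : act (2*i) := ⟨⟨i, by ring⟩, Or.inl (by omega)⟩
        rw [if_neg (not_le.2 h1), if_neg (not_le.2 h2)]
        exact hEgap (2*i) hact2 x (by rw [e4]; exact hi1) (by rw [e6]; exact hi2)
  · -- support of H inside Y
    intro x hx
    simp only [mem_setOf_eq] at hx
    by_contra hY
    exact hx (hHoff x hY)



end Stmt4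




/-- factorization lemma for orientation-preserving homeomorphisms of ℝ
(order-isomorphisms `ℝ ≃o ℝ`): given a sequence `f n`, there are sets `X`, `Y`, each the
image of `⋃_{n ∈ ℤ} [3n, 3n+1]` under an orientation-preserving homeomorphism, and
factorizations `f n = g n ∘ h n ∘ k n` with `k n` compactly supported,
`supp (g n) ⊆ X` and `supp (h n) ⊆ Y`. -/
theorem stmt4 (f : ℕ → (ℝ ≃o ℝ)) :
    ∃ X Y : Set ℝ,
      (∃ φ : ℝ ≃o ℝ, X = φ '' (⋃ n : ℤ, Set.Icc (3 * (n : ℝ)) (3 * (n : ℝ) + 1))) ∧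
      (∃ ψ : ℝ ≃o ℝ, Y = ψ '' (⋃ n : ℤ, Set.Icc (3 * (n : ℝ)) (3 * (n : ℝ) + 1))) ∧
      ∀ n : ℕ, ∃ g h k : ℝ ≃o ℝ,
        (∀ x : ℝ, f n x = g (h (k x))) ∧
        IsCompact (closure {x : ℝ | k x ≠ x}) ∧
        closure {x : ℝ | g x ≠ x} ⊆ X ∧
        closure {x : ℝ | h x ≠ x} ⊆ Y := by
  obtain ⟨φ, hφ⟩ := Stmt4.phi_exists f
  obtain ⟨ψ, hψ⟩ := Stmt4.psi_exists f
  refine ⟨Stmt4.XS f, Stmt4.YS f, ⟨φ, hφ⟩, ⟨ψ, hψ⟩, ?_⟩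
  intro n
  obtain ⟨g, h, k, hfact, hk, hg, hh⟩ := Stmt4.main_step f n
  exact ⟨g, h, k, hfact, hk,
    closure_minimal hg (Stmt4.XS_closed f),
    closure_minimal hh (Stmt4.YS_closed f)⟩
end

section
/- Every strongly distorted group is strongly bounded: if a group G is strongly distorted, then every length function on G is bounded above. -/
/-- A group `G` is strongly distorted if there are `m : ℕ` and `w : ℕ → ℕ` such that for
every sequence `g : ℕ → G` there is a set `S` of cardinality `m` such that each `g n` is a
product of at most `w n` elements of `S ∪ S⁻¹`. -/
def StronglyDistorted (G : Type*) [Group G] : Prop :=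
  ∃ (m : ℕ) (w : ℕ → ℕ), ∀ g : ℕ → G, ∃ S : Finset G, S.card = m ∧
    ∀ n : ℕ, ∃ l : List G, l.length ≤ w n ∧ (∀ x ∈ l, x ∈ S ∨ x⁻¹ ∈ S) ∧ l.prod = g n

/-- every strongly distorted group is strongly bounded: every length
function is bounded above. -/
theorem stmt7 (G : Type*) [Group G] (hG : StronglyDistorted G) (ℓ : G → NNReal)
    (h1 : ℓ 1 = 0) (hinv : ∀ g : G, ℓ g⁻¹ = ℓ g)
    (htri : ∀ g h : G, ℓ (g * h) ≤ ℓ g + ℓ h) :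
    ∃ C : NNReal, ∀ g : G, ℓ g ≤ C := by
  by_contra hC
  push_neg at hC
  obtain ⟨m, w, hw⟩ := hG
  choose g hg using fun n => hC ((w n * n : ℕ) : NNReal)
  obtain ⟨S, -, hS⟩ := hw g
  set M := S.sup ℓ with hM
  have sub : ∀ l : List G, ℓ l.prod ≤ (l.map ℓ).sum := by
    intro l
    induction l with
    | nil => simp [h1]
    | cons a t ih =>
      simp only [List.prod_cons, List.map_cons, List.sum_cons]
      exact le_trans (htri a t.prod) (add_le_add_right ih _)
  have key : ∀ n, ℓ (g n) ≤ (w n : NNReal) * M := by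
    intro n
    obtain ⟨l, hlen, hmem, hprod⟩ := hS n
    have each : ∀ x ∈ l.map ℓ, x ≤ M := by
      intro x hx
      obtain ⟨y, hy, rfl⟩ := List.mem_map.mp hx
      rcases hmem y hy with h | h
      · exact Finset.le_sup h
      · calc ℓ y = ℓ y⁻¹ := (hinv y).symm
          _ ≤ M := Finset.le_sup h
    calc ℓ (g n) = ℓ l.prod := by rw [hprod]
      _ ≤ (l.map ℓ).sum := sub l
      _ ≤ (l.map ℓ).length • M := List.sum_le_card_nsmul _ _ each
      _ = (l.length : NNReal) * M := by simp [nsmul_eq_mul]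
      _ ≤ (w n : NNReal) * M := mul_le_mul_left (by exact_mod_cast hlen) M
  obtain ⟨n, hn⟩ := exists_nat_gt M
  have h2 := lt_of_lt_of_le (hg n) (key n)
  rcases Nat.eq_zero_or_pos (w n) with h0 | h0
  · simp [h0] at h2
  · have hwn : (0 : NNReal) < (w n : NNReal) := by exact_mod_cast h0
    rw [Nat.cast_mul] at h2
    have : (n : NNReal) < M := lt_of_mul_lt_mul_left h2 (le_of_lt hwn)
    exact absurd hn (not_lt.mpr this.le)
end

section
/- Let B be a group and N a normal subgroup of B such that N (as a group) has the Schreier property and the quotient group B/N has the Schreier property. Then B has the Schreier property. -/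
/-- A group `G` has the Schreier property if every countable subset of `G` is contained
in a finitely generated subgroup of `G`. -/
def SchreierProperty (G : Type*) [Group G] : Prop :=
  ∀ s : Set G, s.Countable → ∃ H : Subgroup G, H.FG ∧ s ⊆ ↑H

/-- the Schreier property is closed under extensions: if a normal subgroup
`N` of `B` and the quotient `B/N` both have the Schreier property, then so does `B`. -/
theorem stmt11 (B : Type*) [Group B] (N : Subgroup B) [N.Normal]
    (hN : SchreierProperty ↥N) (hQ : SchreierProperty (B ⧸ N)) :
    SchreierProperty B := by
  classical
  intro s hs
  obtain ⟨Hq, hqFG, hsq⟩ := hQ (QuotientGroup.mk '' s) (hs.image _)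
  obtain ⟨Tq, hTq⟩ := hqFG
  set Tb : Set B := Quotient.out '' (Tq : Set (B ⧸ N)) with hTb
  set K : Subgroup B := Subgroup.closure Tb with hK
  have hmap : K.map (QuotientGroup.mk' N) = Hq := by
    rw [hK, MonoidHom.map_closure]
    have : (QuotientGroup.mk' N) '' Tb = (Tq : Set (B ⧸ N)) := by
      rw [hTb, Set.image_image]
      simp only [QuotientGroup.mk'_apply, QuotientGroup.out_eq', Set.image_id']
    rw [this, hTq]
  have hP : ∀ x ∈ s, ∃ k, k ∈ K ∧ QuotientGroup.mk k = (QuotientGroup.mk x : B ⧸ N) := by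
    intro x hx
    have : (QuotientGroup.mk x : B ⧸ N) ∈ Hq := hsq ⟨x, hx, rfl⟩
    rw [← hmap, Subgroup.mem_map] at this
    obtain ⟨k, hk, hk'⟩ := this
    exact ⟨k, hk, hk'⟩
  let g : B → ↥N := fun x =>
    if h : ∃ k, k ∈ K ∧ QuotientGroup.mk k = (QuotientGroup.mk x : B ⧸ N) then
      ⟨(h.choose)⁻¹ * x, by
        have := h.choose_spec.2
        exact (QuotientGroup.eq ).mp this⟩
    else 1
  obtain ⟨M, hMFG, hMsub⟩ := hN (g '' s) (hs.image _)
  obtain ⟨Fn, hFn⟩ := hMFG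
  refine ⟨Subgroup.closure (Tb ∪ (⇑N.subtype '' (Fn : Set ↥N))), ?_, ?_⟩
  · rw [Subgroup.fg_iff]
    refine ⟨_, rfl, ?_⟩
    exact Set.Finite.union (Tq.finite_toSet.image _) ((Fn.finite_toSet).image _)
  · intro x hx
    have h := hP x hx
    have hgx : g x = ⟨(h.choose)⁻¹ * x, (QuotientGroup.eq).mp h.choose_spec.2⟩ := dif_pos h
    have hk : h.choose ∈ Subgroup.closure (Tb ∪ (⇑N.subtype '' (Fn : Set ↥N))) :=
      Subgroup.closure_mono Set.subset_union_left h.choose_spec.1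
    have hn : (h.choose)⁻¹ * x ∈ Subgroup.closure (Tb ∪ (⇑N.subtype '' (Fn : Set ↥N))) := by
      have hgM : g x ∈ M := hMsub ⟨x, hx, rfl⟩
      have : g x ∈ Subgroup.closure (Fn : Set ↥N) := by rw [hFn]; exact hgM
      have h2 : ((g x : ↥N) : B) ∈ Subgroup.closure (⇑N.subtype '' (Fn : Set ↥N)) := by
        rw [← MonoidHom.map_closure N.subtype]
        exact ⟨g x, this, rfl⟩
      have h3 : ((g x : ↥N) : B) ∈ Subgroup.closure (Tb ∪ (⇑N.subtype '' (Fn : Set ↥N))) :=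
        Subgroup.closure_mono Set.subset_union_right h2
      rwa [hgx] at h3
    have : x = h.choose * ((h.choose)⁻¹ * x) := by group
    rw [this]
    exact Subgroup.mul_mem _ hk hn
end

section
/- Let B be a group and N a normal subgroup of B such that N (as a group) is strongly distorted and the quotient group B/N is strongly distorted. Then B is strongly distorted. -/
/-- strong distortion is closed under extensions: if a normal subgroup `N`
of `B` and the quotient `B/N` are both strongly distorted, then so is `B`. -/
theorem stmt12 (B : Type*) [Group B] (N : Subgroup B) [N.Normal]
    (hN : StronglyDistorted ↥N) (hQ : StronglyDistorted (B ⧸ N)) :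
    StronglyDistorted B := by
  classical
  obtain ⟨mN, wN, hN⟩ := hN
  obtain ⟨mQ, wQ, hQ⟩ := hQ
  cases finite_or_infinite B with
  | inl hfin =>
    have : Fintype B := Fintype.ofFinite B
    refine ⟨Fintype.card B, fun _ => 1, fun g => ⟨Finset.univ, Finset.card_univ, fun n =>
      ⟨[g n], by simp, by simp, by simp⟩⟩⟩
  | inr hinf =>
    refine ⟨mN + 2 * mQ, fun n => wN n + wQ n, fun g => ?_⟩
    obtain ⟨SQ, hSQcard, hSQ⟩ := hQ fun n => QuotientGroup.mk (g n)
    choose lQ hlQlen hlQmem hlQprod using hSQ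
    set σ : B ⧸ N → B := Quotient.out with hσdef
    have hσ : ∀ x : B ⧸ N, QuotientGroup.mk (σ x) = x := fun x => QuotientGroup.out_eq' x
    have hmkprod : ∀ n, (QuotientGroup.mk (((lQ n).map σ).prod) : B ⧸ N) = QuotientGroup.mk (g n) := by
      intro n
      have := map_list_prod (QuotientGroup.mk' N) ((lQ n).map σ)
      simp only [QuotientGroup.mk'_apply] at this
      rw [this, List.map_map]
      have : (⇑(QuotientGroup.mk' N) ∘ σ : B ⧸ N → B ⧸ N) = id := funext hσ
      rw [this, List.map_id, hlQprod]
    have hmem : ∀ n, ((lQ n).map σ).prod⁻¹ * g n ∈ N := fun n =>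
      (QuotientGroup.eq).1 (hmkprod n)
    obtain ⟨SN, hSNcard, hSN⟩ := hN fun n => (⟨_, hmem n⟩ : ↥N)
    choose lN hlNlen hlNmem hlNprod using hSN
    set S0 : Finset B :=
      (SN.image (fun x : ↥N => (x : B))) ∪ (SQ.image σ) ∪ (SQ.image fun z => σ z⁻¹) with hS0
    have hS0card : S0.card ≤ mN + 2 * mQ := by
      calc S0.card ≤ ((SN.image (fun x : ↥N => (x : B))) ∪ (SQ.image σ)).card
            + (SQ.image fun z => σ z⁻¹).card := Finset.card_union_le _ _
        _ ≤ ((SN.image (fun x : ↥N => (x : B))).card + (SQ.image σ).card)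
            + (SQ.image fun z => σ z⁻¹).card := by
              exact Nat.add_le_add_right (Finset.card_union_le _ _) _
        _ ≤ (mN + mQ) + mQ := by
              gcongr
              · exact hSNcard ▸ Finset.card_image_le
              · exact hSQcard ▸ Finset.card_image_le
              · exact hSQcard ▸ Finset.card_image_le
        _ = mN + 2 * mQ := by ring
    obtain ⟨S, hS0S, hScard⟩ := Infinite.exists_superset_card_eq S0 (mN + 2 * mQ) hS0card
    refine ⟨S, hScard, fun n => ?_⟩
    refine ⟨(lQ n).map σ ++ (lN n).map (fun x : ↥N => (x : B)), ?_, ?_, ?_⟩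
    · simp only [List.length_append, List.length_map]
      have := hlQlen n; have := hlNlen n; omega
    · intro x hx
      rcases List.mem_append.1 hx with hx | hx
      · obtain ⟨y, hy, rfl⟩ := List.mem_map.1 hx
        rcases hlQmem n y hy with h | h
        · exact Or.inl (hS0S (by
            simp only [hS0, Finset.mem_union]
            exact Or.inl (Or.inr (Finset.mem_image_of_mem σ h))))
        · refine Or.inl (hS0S ?_)
          simp only [hS0, Finset.mem_union]
          refine Or.inr (Finset.mem_image.2 ⟨y⁻¹, h, by simp⟩)
      · obtain ⟨y, hy, rfl⟩ := List.mem_map.1 hx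
        rcases hlNmem n y hy with h | h
        · exact Or.inl (hS0S (by
            simp only [hS0, Finset.mem_union]
            exact Or.inl (Or.inl (Finset.mem_image_of_mem _ h))))
        · refine Or.inr (hS0S ?_)
          simp only [hS0, Finset.mem_union]
          refine Or.inl (Or.inl (Finset.mem_image.2 ⟨y⁻¹, h, by simp⟩))
    · rw [List.prod_append]
      have h2 : ((lN n).map (fun x : ↥N => (x : B))).prod = ((lN n).prod : B) :=
        (map_list_prod N.subtype (lN n)).symm
      rw [h2, hlNprod, mul_inv_cancel_left]
end

section
/- Let G be a finite group with more than one element, and let H = ∏_{n∈ℕ} G be the direct product of countably many copies of G (the group of all functions ℕ → G with pointwise multiplication). Then H does not have the Schreier property: there exists a sequence (h_n) of elements of H such that no finitely generated subgroup of H contains every h_n. -/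
/-- The subgroup of functions `ℕ → G` that are constant on the equivalence classes
determined by a set `S` of functions (two indices are equivalent when every element
of `S` agrees on them). -/
def constOnClasses (G : Type*) [Group G] (S : Set (ℕ → G)) : Subgroup (ℕ → G) where
  carrier := {f | ∀ n m : ℕ, (∀ s ∈ S, s n = s m) → f n = f m}
  one_mem' := by intro n m _; rfl
  mul_mem' := by
    intro f g hf hg n m hnm
    simp only [Pi.mul_apply, hf n m hnm, hg n m hnm]
  inv_mem' := by
    intro f hf n m hnm
    simp only [Pi.inv_apply, hf n m hnm]

lemma constOnClasses_finite (G : Type*) [Group G] [Finite G] (S : Finset (ℕ → G)) :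
    Finite (constOnClasses G (S : Set (ℕ → G))) := by
  classical
  set k : ℕ → (S → G) := fun n s => (s : ℕ → G) n with hk
  have : Finite (Set.range k → G) := by infer_instance
  refine Finite.of_injective
    (fun f : constOnClasses G (S : Set (ℕ → G)) =>
      (fun v : Set.range k => (f : ℕ → G) v.2.choose : Set.range k → G)) ?_
  intro f g hfg
  ext n
  have hv : k n ∈ Set.range k := ⟨n, rfl⟩
  have hspec : k hv.choose = k n := hv.choose_spec
  have hagree : ∀ s ∈ (S : Set (ℕ → G)), s n = s hv.choose := by
    intro s hs
    have := congrFun hspec ⟨s, hs⟩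
    simpa [hk] using this.symm
  have h1 : (f : ℕ → G) n = (f : ℕ → G) hv.choose := f.2 n hv.choose hagree
  have h2 : (g : ℕ → G) n = (g : ℕ → G) hv.choose := g.2 n hv.choose hagree
  have := congrFun hfg ⟨k n, hv⟩
  simp only at this
  rw [h1, h2, this]

/-- for a finite nontrivial group `G`, the countable direct product
`H = ∏_{n ∈ ℕ} G` (all functions `ℕ → G` with pointwise multiplication) does not have
the Schreier property: there is a sequence of elements of `H` not contained in any
finitely generated subgroup of `H`. -/
theorem stmt14 (G : Type*) [Group G] [Finite G] [Nontrivial G] :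
    ∃ h : ℕ → (ℕ → G), ∀ H : Subgroup (ℕ → G), H.FG → ¬ (∀ n : ℕ, h n ∈ H) := by
  classical
  obtain ⟨g, hg⟩ := exists_ne (1 : G)
  refine ⟨fun n m => if m = n then g else 1, ?_⟩
  rintro H ⟨S, rfl⟩ hall
  have hSC : (S : Set (ℕ → G)) ⊆ (constOnClasses G (S : Set (ℕ → G)) : Set (ℕ → G)) :=
    fun s hs n m hnm => hnm s hs
  have hHC : Subgroup.closure (S : Set (ℕ → G)) ≤ constOnClasses G (S : Set (ℕ → G)) :=
    (Subgroup.closure_le _).mpr hSC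
  have hfin : Finite (constOnClasses G (S : Set (ℕ → G))) := constOnClasses_finite G S
  have hinj : Function.Injective
      (fun n : ℕ => (⟨fun m => if m = n then g else 1, hHC (hall n)⟩ :
        constOnClasses G (S : Set (ℕ → G)))) := by
    intro a b hab
    by_contra hne
    have := congrFun (congrArg (Subtype.val) hab) a
    simp only [if_pos rfl, if_neg (fun h : a = b => hne h)] at this
    exact hg this
  have : Finite ℕ := Finite.of_injective _ hinj
  exact not_finite ℕ
end

section
/- Let G be a group and N a normal subgroup of G such that N (as a group) has the Schreier property and the quotient group G/N is countable. Then G has the Schreier property if and only if G/N is finitely generated. -/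
/-- if `N` is a normal subgroup of `G` with the Schreier property and the
quotient `G/N` is countable, then `G` has the Schreier property iff `G/N` is finitely
generated. -/
theorem stmt19 (G : Type*) [Group G] (N : Subgroup G) [N.Normal]
    (hN : SchreierProperty ↥N) [Countable (G ⧸ N)] :
    SchreierProperty G ↔ Group.FG (G ⧸ N) := by
  constructor
  · intro hG
    obtain ⟨H, hHfg, hs⟩ := hG (Set.range (Quotient.out : G ⧸ N → G))
      (Set.countable_range _)
    obtain ⟨S, hScl, hSfin⟩ := (Subgroup.fg_iff H).mp hHfg
    rw [Group.fg_iff]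
    refine ⟨(QuotientGroup.mk' N) '' S, ?_, hSfin.image _⟩
    rw [eq_top_iff]
    intro q _
    have : q.out ∈ H := hs ⟨q, rfl⟩
    rw [← hScl] at this
    have h2 : (QuotientGroup.mk' N) q.out ∈ (Subgroup.closure S).map (QuotientGroup.mk' N) :=
      Subgroup.mem_map_of_mem _ this
    rw [MonoidHom.map_closure] at h2
    simpa using h2
  · intro hfg s hs
    obtain ⟨S, hScl, hSfin⟩ := Group.fg_iff.mp hfg
    set T : Set G := Quotient.out '' S with hT
    have hmapT : (Subgroup.closure T).map (QuotientGroup.mk' N) = ⊤ := by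
      rw [MonoidHom.map_closure, hT, ← Set.image_comp]
      have : (QuotientGroup.mk' N) ∘ (Quotient.out : G ⧸ N → G) = id := by
        funext q; simp [QuotientGroup.mk'_apply]
      rw [this, Set.image_id, hScl]
    -- choose lifts
    have hchoice : ∀ x : G, ∃ h : G, h ∈ Subgroup.closure T ∧
        (QuotientGroup.mk' N) h = (QuotientGroup.mk' N) x := by
      intro x
      have : (QuotientGroup.mk' N) x ∈ (Subgroup.closure T).map (QuotientGroup.mk' N) := by
        rw [hmapT]; trivial
      obtain ⟨h, hh, heq⟩ := this
      exact ⟨h, hh, heq⟩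
    choose f hf hfeq using hchoice
    have hmem : ∀ x : G, (f x)⁻¹ * x ∈ N := by
      intro x
      have := (QuotientGroup.eq (s := N)).mp ((hfeq x))
      simpa using this
    set nn : G → ↥N := fun x => ⟨(f x)⁻¹ * x, hmem x⟩ with hnn
    obtain ⟨K, hKfg, hKsub⟩ := hN (nn '' s) (hs.image _)
    obtain ⟨U, hUcl, hUfin⟩ := (Subgroup.fg_iff K).mp hKfg
    refine ⟨Subgroup.closure (T ∪ (Subtype.val '' U)), ?_, ?_⟩
    · exact (Subgroup.fg_iff _).mpr ⟨_, rfl, (hSfin.image _).union (hUfin.image _)⟩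
    · intro x hx
      have h1 : f x ∈ Subgroup.closure (T ∪ (Subtype.val '' U)) :=
        Subgroup.closure_mono Set.subset_union_left (hf x)
      have h2 : (nn x : G) ∈ Subgroup.closure (T ∪ (Subtype.val '' U)) := by
        have hk : nn x ∈ Subgroup.closure U := by rw [hUcl]; exact hKsub ⟨x, hx, rfl⟩
        have : (nn x : G) ∈ (Subgroup.closure U).map N.subtype :=
          Subgroup.mem_map_of_mem _ hk
        rw [MonoidHom.map_closure] at this
        exact Subgroup.closure_mono Set.subset_union_right (by simpa using this)
      have : x = f x * (nn x : G) := by simp [hnn]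
      rw [this]
      exact mul_mem h1 h2
end
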